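/- Let ℓ be a prime and let P be a finite ℓ-group of ℓ-rank 2 (P contains an elementary abelian ℓ-subgroup of order ℓ² but none of order ℓ³) whose center Z(P) is not cyclic. Then P has exactly one maximal elementary abelian ℓ-subgroup of rank 2; that is, there is a unique elementary abelian ℓ-subgroup E of P with |E| = ℓ² that is maximal among elementary abelian ℓ-subgroups of P. -/

import Mathlib

open Finset Pointwise

/-- An elementary abelian `ℓ`-subgroup: a subgroup that is commutative and in which
every element `x` satisfies `x ^ ℓ = 1`. -/
def IsElementaryAbelian (ℓ : ℕ) {G : Type*} [Group G] (E : Subgroup G) : Prop :=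
  (∀ x ∈ E, ∀ y ∈ E, x * y = y * x) ∧ ∀ x ∈ E, x ^ ℓ = 1

/-- The conjugate subgroup `g E g⁻¹`. -/
def conjSubgroup {G : Type*} [Group G] (g : G) (E : Subgroup G) : Subgroup G :=
  E.map (MulAut.conj g).toMonoidHom

/-- A maximal elementary abelian `ℓ`-subgroup: one that is not properly contained in
any other elementary abelian `ℓ`-subgroup. -/
def IsMaximalElementaryAbelian (ℓ : ℕ) {G : Type*} [Group G] (E : Subgroup G) : Prop :=
  IsElementaryAbelian ℓ E ∧
    ∀ E' : Subgroup G, IsElementaryAbelian ℓ E' → E ≤ E' → E' = E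

/-- In a finite commutative `ℓ`-group in which at most `ℓ` elements satisfy `x ^ ℓ = 1`,
the group is cyclic. -/
lemma aux_isCyclic_of_few_torsion {ℓ : ℕ} (hℓ : ℓ.Prime) {G : Type*} [CommGroup G]
    [Fintype G] [DecidableEq G]
    (hG : IsPGroup ℓ G) (h : #{a : G | a ^ ℓ = 1} ≤ ℓ) : IsCyclic G := by
  have key : ∀ k : ℕ, #{a : G | a ^ (ℓ ^ k) = 1} ≤ ℓ ^ k := by
    intro k
    induction k with
    | zero => simpa using Finset.card_le_one.2 (by simp)
    | succ k ih =>
        have := Finset.card_le_mul_card_image (f := fun a : G => a ^ ℓ)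
          ({a : G | a ^ (ℓ ^ (k+1)) = 1}) ℓ ?_
        · refine this.trans ?_
          rw [pow_succ, mul_comm (ℓ ^ k) ℓ]
          refine Nat.mul_le_mul_left ℓ (le_trans (Finset.card_le_card ?_) ih)
          intro b hb
          simp only [Finset.mem_image, Finset.mem_filter, Finset.mem_univ, true_and] at hb ⊢
          obtain ⟨a, ha, rfl⟩ := hb
          rw [← pow_mul]
          exact ha
        · intro b hb
          simp only [Finset.mem_image, Finset.mem_filter, Finset.mem_univ, true_and] at hb
          obtain ⟨a0, ha0, rfl⟩ := hb
          refine le_trans (Finset.card_le_card_of_injOn (fun a => a * a0⁻¹) ?_ ?_) h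
          · intro a ha
            simp only [Finset.coe_filter, Finset.mem_filter, Finset.mem_univ, true_and, Set.mem_setOf_eq] at ha ⊢
            obtain ⟨ha1, ha2⟩ := ha
            rw [mul_pow, ha2, inv_pow, mul_inv_cancel]
          · intro a _ b _ hab
            exact mul_right_cancel hab
  refine isCyclic_of_card_pow_eq_one_le ?_
  intro n hn
  have hsets : (Finset.univ.filter fun a : G => a ^ n = 1)
      = Finset.univ.filter fun a : G => a ^ (ℓ ^ (n.factorization ℓ)) = 1 := by
    apply Finset.ext
    intro a
    simp only [Finset.mem_filter, Finset.mem_univ, true_and]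
    obtain ⟨m, hm⟩ := (haveI : Fact ℓ.Prime := ⟨hℓ⟩; IsPGroup.iff_orderOf).mp hG a
    rw [← orderOf_dvd_iff_pow_eq_one, ← orderOf_dvd_iff_pow_eq_one, hm,
      Nat.pow_dvd_pow_iff_le_right hℓ.one_lt,
      ← Nat.Prime.pow_dvd_iff_le_factorization hℓ hn.ne']
  show #(Finset.univ.filter fun a : G => a ^ n = 1) ≤ n
  rw [hsets]
  exact (key _).trans (Nat.ordProj_le ℓ hn.ne')

/-- A finite `ℓ`-group of `ℓ`-rank 2 with noncyclic center has exactly one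
maximal elementary abelian `ℓ`-subgroup of rank 2. -/
theorem unique_maximal_rank_two_of_rank_two_noncyclic_center
    (ℓ : ℕ) (hℓ : ℓ.Prime) (P : Type*) [Group P] [Finite P] (hP : IsPGroup ℓ P)
    (hrk2 : ∃ E : Subgroup P, IsElementaryAbelian ℓ E ∧ Nat.card E = ℓ ^ 2)
    (hrk3 : ¬ ∃ E : Subgroup P, IsElementaryAbelian ℓ E ∧ Nat.card E = ℓ ^ 3)
    (hZ : ¬ IsCyclic (Subgroup.center P)) :
    ∃! E : Subgroup P, Nat.card E = ℓ ^ 2 ∧ IsMaximalElementaryAbelian ℓ E := by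
  classical
  have : Fact ℓ.Prime := ⟨hℓ⟩
  -- A consequence of hrk3: every elementary abelian subgroup has card ≤ ℓ ^ 2.
  have hsmall : ∀ E : Subgroup P, IsElementaryAbelian ℓ E → Nat.card E ≤ ℓ ^ 2 := by
    intro E hE
    by_contra hlt
    push_neg at hlt
    obtain ⟨k, hk⟩ := (hP.to_subgroup E).exists_card_eq
    rw [hk] at hlt
    have h3k : (3 : ℕ) ≤ k := by
      by_contra h3
      push_neg at h3
      exact absurd (Nat.pow_le_pow_right hℓ.pos (by omega) :
        ℓ ^ k ≤ ℓ ^ 2) (not_le.mpr hlt)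
    obtain ⟨E', hE'le, hE'card⟩ := Sylow.exists_subgroup_le_card_pow_prime_of_le_card
      (n := 3) hℓ hP (by rw [hk]; exact Nat.pow_le_pow_right hℓ.pos h3k)
    exact hrk3 ⟨E', ⟨fun x hx y hy => hE.1 x (hE'le hx) y (hE'le hy),
      fun x hx => hE.2 x (hE'le hx)⟩, hE'card⟩
  -- The subgroup Ω₁(Z(P)).
  set E₀ : Subgroup P :=
    { carrier := {x | x ∈ Subgroup.center P ∧ x ^ ℓ = 1}
      one_mem' := ⟨Subgroup.one_mem _, one_pow ℓ⟩
      mul_mem' := by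
        rintro a b ⟨ha, ha1⟩ ⟨hb, hb1⟩
        refine ⟨Subgroup.mul_mem _ ha hb, ?_⟩
        have hcomm : Commute a b := (Subgroup.mem_center_iff.mp ha b).symm
        rw [hcomm.mul_pow, ha1, hb1, one_mul]
      inv_mem' := by
        rintro a ⟨ha, ha1⟩
        exact ⟨Subgroup.inv_mem _ ha, by rw [inv_pow, ha1, inv_one]⟩ } with hE₀def
  have hE₀center : ∀ x ∈ E₀, x ∈ Subgroup.center P := fun x hx => hx.1
  have hE₀elem : IsElementaryAbelian ℓ E₀ := by
    constructor
    · intro x hx y hy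
      exact (Subgroup.mem_center_iff.mp (hE₀center x hx) y).symm
    · intro x hx
      exact hx.2
  -- E₀ has cardinality ≥ ℓ ^ 2, since the center is not cyclic.
  haveI : Fintype P := Fintype.ofFinite P
  have hbig : ℓ < Nat.card E₀ := by
    by_contra hle
    push_neg at hle
    apply hZ
    open IsMulCommutative in
    refine aux_isCyclic_of_few_torsion hℓ (G := Subgroup.center P) (by exact hP.to_subgroup (Subgroup.center P)) ?_
    have h1 : Nat.card E₀ = Nat.card {a : Subgroup.center P // a ^ ℓ = 1} := by
      refine Nat.card_congr ⟨fun x => ⟨⟨x.1, x.2.1⟩, Subtype.ext x.2.2⟩,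
        fun y => ⟨y.1.1, y.1.2, congrArg Subtype.val y.2⟩,
        fun x => rfl, fun y => rfl⟩
    have h2 : Nat.card {a : Subgroup.center P // a ^ ℓ = 1}
        = #(Finset.univ.filter fun a : Subgroup.center P => a ^ ℓ = 1) := by
      rw [Nat.card_eq_fintype_card, Fintype.card_subtype]
    rw [← h2, ← h1]
    exact hle
  have hE₀card : Nat.card E₀ = ℓ ^ 2 := by
    obtain ⟨k, hk⟩ := (hP.to_subgroup E₀).exists_card_eq
    have h2 : Nat.card E₀ ≤ ℓ ^ 2 := hsmall E₀ hE₀elem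
    rw [hk] at hbig h2 ⊢
    have : 2 ≤ k := by
      by_contra h
      push_neg at h
      exact absurd (Nat.pow_le_pow_right hℓ.pos (by omega) : ℓ ^ k ≤ ℓ ^ 1)
        (not_le.mpr (by simpa using hbig))
    have : k = 2 := le_antisymm ((Nat.pow_le_pow_iff_right hℓ.one_lt).mp h2) this
    rw [this]
  -- E₀ is normal (it is contained in the center).
  haveI hE₀normal : E₀.Normal := by
    constructor
    intro n hn g
    rw [Subgroup.mem_center_iff.mp (hE₀center n hn) g, mul_assoc,
      mul_inv_cancel, mul_one]
    exact hn
  -- key step: any elementary abelian subgroup E with E maximal contains E₀.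
  have hkey : ∀ E : Subgroup P, IsMaximalElementaryAbelian ℓ E → E₀ ≤ E := by
    intro E hE
    have hsup : IsElementaryAbelian ℓ (E ⊔ E₀) := by
      have hmem : ∀ z ∈ E ⊔ E₀, ∃ a ∈ E, ∃ b ∈ E₀, z = a * b := by
        intro z hz
        have : z ∈ ((E : Set P) * (E₀ : Set P)) := by
          rw [← Subgroup.mul_normal E E₀]
          exact hz
        obtain ⟨a, ha, b, hb, rfl⟩ := Set.mem_mul.mp this
        exact ⟨a, ha, b, hb, rfl⟩
      constructor
      · intro x hx y hy
        obtain ⟨a, ha, b, hb, rfl⟩ := hmem x hx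
        obtain ⟨c, hc, d, hd, rfl⟩ := hmem y hy
        have hac : Commute a c := hE.1.1 a ha c hc
        have had : Commute a d := Subgroup.mem_center_iff.mp (hE₀center d hd) a
        have hbc : Commute b c := (Subgroup.mem_center_iff.mp (hE₀center b hb) c).symm
        have hbd : Commute b d := hE₀elem.1 b hb d hd
        exact (hac.mul_left hbc).mul_right (had.mul_left hbd)
      · intro x hx
        obtain ⟨a, ha, b, hb, rfl⟩ := hmem x hx
        have hcomm : Commute a b := Subgroup.mem_center_iff.mp (hE₀center b hb) a
        rw [hcomm.mul_pow, hE.1.2 a ha, hb.2, one_mul]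
    have := hE.2 (E ⊔ E₀) hsup le_sup_left
    rw [← this]
    exact le_sup_right
  -- E₀ itself is maximal elementary abelian of rank 2.
  have hE₀max : IsMaximalElementaryAbelian ℓ E₀ := by
    refine ⟨hE₀elem, fun E' hE' hle => ?_⟩
    refine (Subgroup.eq_of_le_of_card_ge hle ?_).symm
    rw [hE₀card]
    exact hsmall E' hE'
  refine ⟨E₀, ⟨hE₀card, hE₀max⟩, ?_⟩
  rintro E ⟨hEcard, hEmax⟩
  exact (Subgroup.eq_of_le_of_card_ge (hkey E hEmax) (by rw [hEcard, hE₀card])).symm
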